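/- Let s ≠ t be reflections in GL_n(ℚ) that generate a finite subgroup R = ⟨s, t⟩. Then, as a ℚ-vector space, ℚ[x_1,…,x_n] is the internal direct sum ℚ[x_1,…,x_n] = ℚ[x_1,…,x_n]^R_det ⊕ (ℚ[x_1,…,x_n]^s + ℚ[x_1,…,x_n]^t); equivalently, these two (graded) subspaces intersect trivially and their sum contains every polynomial, in each homogeneous degree. -/
import Mathlib


open Matrix MvPolynomial

/-- The action of an `n × n` rational matrix on `ℚ[x_1, …, x_n]` by linear substitution
of the variables: `x_i ↦ ∑ j, g j i • x_j`. -/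
noncomputable def matAct {n : ℕ} (g : Matrix (Fin n) (Fin n) ℚ) :
    MvPolynomial (Fin n) ℚ →ₐ[ℚ] MvPolynomial (Fin n) ℚ :=
  MvPolynomial.aeval fun i => ∑ j, MvPolynomial.C (g j i) * MvPolynomial.X j

/-- The fixed subspace of `g ∈ GL_n(ℚ)` acting on `ℚ^n`; for a reflection this is its
reflecting hyperplane. -/
noncomputable def fixedSpace {n : ℕ} (g : GL (Fin n) ℚ) : Submodule ℚ (Fin n → ℚ) :=
  LinearMap.ker (Matrix.toLin' (g : Matrix (Fin n) (Fin n) ℚ) - LinearMap.id)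

/-- A reflection is an involution in `GL_n(ℚ)` whose fixed subspace has dimension `n - 1`. -/
def IsReflection {n : ℕ} (r : GL (Fin n) ℚ) : Prop :=
  r * r = 1 ∧ Module.finrank ℚ (fixedSpace r) = n - 1

/-- The subspace `ℚ[x_1, …, x_n]^H` of polynomials invariant under a subgroup
`H ≤ GL_n(ℚ)`. -/
noncomputable def polyInvariants {n : ℕ} (H : Subgroup (GL (Fin n) ℚ)) :
    Submodule ℚ (MvPolynomial (Fin n) ℚ) where
  carrier := {f | ∀ g ∈ H, matAct ((g : GL (Fin n) ℚ) : Matrix (Fin n) (Fin n) ℚ) f = f}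
  add_mem' := by
    intro a b ha hb g hg
    rw [map_add, ha g hg, hb g hg]
  zero_mem' := by
    intro g hg
    rw [map_zero]
  smul_mem' := by
    intro c f hf g hg
    rw [_root_.map_smul, hf g hg]

/-- The relative invariants `ℚ[x_1, …, x_n]^H_det` (with respect to the determinant) of a
subgroup `H ≤ GL_n(ℚ)`: the polynomials `f` with `g • f = det g • f` for all `g ∈ H`. -/
noncomputable def polyRelInvariants {n : ℕ} (H : Subgroup (GL (Fin n) ℚ)) :
    Submodule ℚ (MvPolynomial (Fin n) ℚ) where
  carrier := {f | ∀ g ∈ H,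
    matAct ((g : GL (Fin n) ℚ) : Matrix (Fin n) (Fin n) ℚ) f
      = ((g : GL (Fin n) ℚ) : Matrix (Fin n) (Fin n) ℚ).det • f}
  add_mem' := by
    intro a b ha hb g hg
    rw [map_add, ha g hg, hb g hg, smul_add]
  zero_mem' := by
    intro g hg
    rw [map_zero, smul_zero]
  smul_mem' := by
    intro c f hf g hg
    rw [_root_.map_smul, hf g hg, smul_comm]

/-- The subspace `ℚ[x_1, …, x_n]^g` of polynomials fixed by a single element
`g ∈ GL_n(ℚ)`. -/
noncomputable def polyInvariantsElem {n : ℕ} (g : GL (Fin n) ℚ) :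
    Submodule ℚ (MvPolynomial (Fin n) ℚ) where
  carrier := {f | matAct ((g : GL (Fin n) ℚ) : Matrix (Fin n) (Fin n) ℚ) f = f}
  add_mem' := by
    intro a b ha hb
    rw [Set.mem_setOf_eq, map_add, ha, hb]
  zero_mem' := by
    rw [Set.mem_setOf_eq, map_zero]
  smul_mem' := by
    intro c f hf
    rw [Set.mem_setOf_eq, _root_.map_smul, hf]


section AuxLemmas

lemma matAct_one' {n : ℕ} (f : MvPolynomial (Fin n) ℚ) : matAct 1 f = f := by
  have : matAct (n := n) 1 = AlgHom.id ℚ _ := by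
    apply MvPolynomial.algHom_ext
    intro i
    simp [matAct, Matrix.one_apply]
  rw [this]; rfl

lemma matAct_mul' {n : ℕ} (A B : Matrix (Fin n) (Fin n) ℚ) (f : MvPolynomial (Fin n) ℚ) :
    matAct (A * B) f = matAct A (matAct B f) := by
  have : matAct (A * B) = (matAct A).comp (matAct B) := by
    apply MvPolynomial.algHom_ext
    intro i
    simp only [matAct, AlgHom.comp_apply, aeval_X, Matrix.mul_apply, map_sum, _root_.map_mul,
      aeval_C, algebraMap_eq, Finset.sum_mul, Finset.mul_sum]
    rw [Finset.sum_comm]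
    apply Finset.sum_congr rfl
    intro k _
    apply Finset.sum_congr rfl
    intro j _
    ring
  rw [this]; rfl

lemma matAct_units_mul {n : ℕ} (g h : GL (Fin n) ℚ) (f : MvPolynomial (Fin n) ℚ) :
    matAct ((g * h : GL (Fin n) ℚ) : Matrix (Fin n) (Fin n) ℚ) f
      = matAct (g : Matrix (Fin n) (Fin n) ℚ) (matAct (h : Matrix (Fin n) (Fin n) ℚ) f) := by
  rw [Units.val_mul, matAct_mul']

lemma refl_det_neg_one {n : ℕ} (hn : 0 < n) {r : GL (Fin n) ℚ} (hr : IsReflection r) :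
    ((r : GL (Fin n) ℚ) : Matrix (Fin n) (Fin n) ℚ).det = -1 := by
  classical
  set A : Matrix (Fin n) (Fin n) ℚ := ((r : GL (Fin n) ℚ) : Matrix (Fin n) (Fin n) ℚ) with hA
  set M : (Fin n → ℚ) →ₗ[ℚ] (Fin n → ℚ) := Matrix.toLin' A with hMdef
  have hAA : A * A = 1 := by
    have := congrArg (Units.val) hr.1
    simpa using this
  have hM2 : ∀ x, M (M x) = x := by
    intro x
    have : M ∘ₗ M = LinearMap.id := by
      rw [hMdef, ← Matrix.toLin'_mul, hAA, Matrix.toLin'_one]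
    exact congrFun (congrArg (fun f => f.toFun) this) x
  set Kp : Submodule ℚ (Fin n → ℚ) := LinearMap.ker (M - LinearMap.id) with hKp
  set Km : Submodule ℚ (Fin n → ℚ) := LinearMap.ker (M + LinearMap.id) with hKm
  have memKp : ∀ x, x ∈ Kp ↔ M x = x := by
    intro x
    simp [hKp, LinearMap.mem_ker, sub_eq_zero]
  have memKm : ∀ x, x ∈ Km ↔ M x = -x := by
    intro x
    simp [hKm, LinearMap.mem_ker, add_eq_zero_iff_eq_neg]
  have hcompl : IsCompl Kp Km := by
    constructor
    · rw [Submodule.disjoint_def]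
      intro x hxp hxm
      have h1 := (memKp x).1 hxp
      have h2 := (memKm x).1 hxm
      have hxx : x + x = 0 := by nth_rewrite 1 [← h1]; rw [h2]; abel
      have h2x : (2:ℚ) • x = 0 := by rw [two_smul]; exact hxx
      exact (smul_eq_zero.mp h2x).resolve_left (by norm_num)
    · rw [codisjoint_iff, eq_top_iff]
      intro x _
      have hx : x = (2:ℚ)⁻¹ • (x + M x) + (2:ℚ)⁻¹ • (x - M x) := by
        rw [← smul_add]
        rw [show x + M x + (x - M x) = (2:ℚ) • x by module]
        rw [smul_smul]; norm_num
      rw [hx]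
      refine Submodule.add_mem _ (Submodule.mem_sup_left (Submodule.smul_mem _ _ ?_))
        (Submodule.mem_sup_right (Submodule.smul_mem _ _ ?_))
      · rw [memKp, map_add, hM2]; abel
      · rw [memKm, map_sub, hM2]; abel
  have hfix : Module.finrank ℚ Kp = n - 1 := hr.2
  have hsum : Module.finrank ℚ Kp + Module.finrank ℚ Km = n := by
    rw [Submodule.finrank_add_eq_of_isCompl hcompl, Module.finrank_fin_fun]
  have hKm1 : Module.finrank ℚ Km = 1 := by omega
  have hplus : ∀ x ∈ Kp, M x ∈ Kp := by
    intro x hx; rwa [(memKp x).1 hx]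
  have hminus : ∀ x ∈ Km, M x ∈ Km := by
    intro x hx; rw [(memKm x).1 hx]; exact Submodule.neg_mem _ hx
  set F := M.restrict hplus with hFdef
  set G := M.restrict hminus with hGdef
  have hF : F = LinearMap.id := by
    apply LinearMap.ext; intro x; apply Subtype.ext
    rw [hFdef, LinearMap.restrict_coe_apply]
    exact (memKp x).1 x.2
  have hG : G = -LinearMap.id := by
    apply LinearMap.ext; intro x; apply Subtype.ext
    rw [hGdef, LinearMap.restrict_coe_apply]
    exact (memKm x).1 x.2
  set e := Submodule.prodEquivOfIsCompl Kp Km hcompl with hedef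
  have hconj : M = (↑e : (Kp × Km) →ₗ[ℚ] (Fin n → ℚ)) ∘ₗ (F.prodMap G) ∘ₗ (↑e.symm) := by
    apply LinearMap.ext; intro x
    have hx : (↑(e.symm x).1 + ↑(e.symm x).2 : Fin n → ℚ) = x := by
      conv_rhs => rw [← e.apply_symm_apply x]
      rw [Submodule.coe_prodEquivOfIsCompl']
    simp only [LinearMap.comp_apply, LinearEquiv.coe_coe, LinearMap.prodMap_apply, hedef,
      hFdef, hGdef, Submodule.coe_prodEquivOfIsCompl', LinearMap.restrict_coe_apply]
    rw [← map_add]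
    rw [hedef] at hx
    rw [hx]
  have hdetM : LinearMap.det M = -1 := by
    rw [hconj, LinearMap.det_conj (F.prodMap G) e]
    let bV := Module.finBasis ℚ Kp
    let bW := Module.finBasis ℚ Km
    rw [← LinearMap.det_toMatrix (bV.prod bW), LinearMap.toMatrix_prodMap bV bW F G,
      Matrix.det_fromBlocks_zero₁₂, LinearMap.det_toMatrix, LinearMap.det_toMatrix,
      hF, hG, LinearMap.det_id]
    have hneg : (-LinearMap.id : Km →ₗ[ℚ] Km) = (-1 : ℚ) • LinearMap.id := by
      ext v; simp
    rw [hneg, LinearMap.det_smul, hKm1, LinearMap.det_id]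
    norm_num
  rw [show A.det = LinearMap.det M from (LinearMap.det_toLin' A).symm]
  exact hdetM

lemma det_pm {n : ℕ} (s t : GL (Fin n) ℚ)
    (hds : ((s : GL (Fin n) ℚ) : Matrix (Fin n) (Fin n) ℚ).det = -1)
    (hdt : ((t : GL (Fin n) ℚ) : Matrix (Fin n) (Fin n) ℚ).det = -1)
    {g : GL (Fin n) ℚ} (hg : g ∈ Subgroup.closure {s, t}) :
    ((g : GL (Fin n) ℚ) : Matrix (Fin n) (Fin n) ℚ).det = 1 ∨
      ((g : GL (Fin n) ℚ) : Matrix (Fin n) (Fin n) ℚ).det = -1 := by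
  induction hg using Subgroup.closure_induction with
  | mem x hx =>
      rcases hx with h | h
      · right; rw [h]; exact hds
      · right; rw [h]; exact hdt
  | one => left; simp
  | mul x y _ _ hx hy =>
      rw [Units.val_mul, Matrix.det_mul]
      rcases hx with h | h <;> rcases hy with h' | h' <;> rw [h, h'] <;> norm_num
  | inv x _ hx =>
      have key : ((x⁻¹ : GL (Fin n) ℚ) : Matrix (Fin n) (Fin n) ℚ).det
          * ((x : GL (Fin n) ℚ) : Matrix (Fin n) (Fin n) ℚ).det = 1 := by
        rw [← Matrix.det_mul, ← Units.val_mul, inv_mul_cancel, Units.val_one, Matrix.det_one]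
      rcases hx with h | h
      · left; rw [h, mul_one] at key; exact key
      · right; rw [h] at key; linarith

lemma mem_submonoid_closure {G : Type*} [Group G] {s t : G} (hs : s * s = 1) (ht : t * t = 1)
    {g : G} (hg : g ∈ Subgroup.closure {s, t}) : g ∈ Submonoid.closure {s, t} := by
  have h1 : g ∈ (Subgroup.closure {s, t}).toSubmonoid := hg
  rw [Subgroup.closure_toSubmonoid] at h1
  have h2 : Submonoid.closure ({s, t} ∪ {s, t}⁻¹) ≤ Submonoid.closure {s, t} := by
    apply Submonoid.closure_le.2
    apply Set.union_subset
    · exact Submonoid.subset_closure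
    · intro x hx
      rcases hx with h | h
      · have hx' : x = s := by rw [← inv_inv x, h]; exact inv_eq_of_mul_eq_one_right hs
        subst hx'; exact Submonoid.subset_closure (Set.mem_insert _ _)
      · have hx' : x = t := by rw [← inv_inv x, h]; exact inv_eq_of_mul_eq_one_right ht
        subst hx'; exact Submonoid.subset_closure (Set.mem_insert_of_mem _ rfl)
  exact h2 h1

lemma mem_polyInvariantsElem {n : ℕ} (g : GL (Fin n) ℚ) (f : MvPolynomial (Fin n) ℚ) :
    f ∈ polyInvariantsElem g ↔ matAct ((g : GL (Fin n) ℚ) : Matrix (Fin n) (Fin n) ℚ) f = f :=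
  Iff.rfl

lemma sub_det_smul_mem {n : ℕ} {s t : GL (Fin n) ℚ} (hss : s * s = 1) (htt : t * t = 1)
    (hds : ((s : GL (Fin n) ℚ) : Matrix (Fin n) (Fin n) ℚ).det = -1)
    (hdt : ((t : GL (Fin n) ℚ) : Matrix (Fin n) (Fin n) ℚ).det = -1)
    {g : GL (Fin n) ℚ} (hg : g ∈ Subgroup.closure {s, t}) (f : MvPolynomial (Fin n) ℚ) :
    f - ((g : GL (Fin n) ℚ) : Matrix (Fin n) (Fin n) ℚ).det •
        matAct ((g : GL (Fin n) ℚ) : Matrix (Fin n) (Fin n) ℚ) f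
      ∈ polyInvariantsElem s ⊔ polyInvariantsElem t := by
  have hg' : g ∈ Submonoid.closure {s, t} := mem_submonoid_closure hss htt hg
  clear hg
  induction hg' using Submonoid.closure_induction_left with
  | one =>
      rw [Units.val_one, Matrix.det_one, matAct_one', one_smul, sub_self]
      exact Submodule.zero_mem _
  | mul_left x hx y hy ih =>
      have hxfacts : x * x = 1 ∧ ((x : GL (Fin n) ℚ) : Matrix (Fin n) (Fin n) ℚ).det = -1 ∧
          polyInvariantsElem x ≤ polyInvariantsElem s ⊔ polyInvariantsElem t := by
        rcases hx with h | h
        · subst h; exact ⟨hss, hds, le_sup_left⟩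
        · have : x = t := h
          subst this; exact ⟨htt, hdt, le_sup_right⟩
      obtain ⟨hxx, hdx, hle⟩ := hxfacts
      set u : MvPolynomial (Fin n) ℚ :=
        ((y : GL (Fin n) ℚ) : Matrix (Fin n) (Fin n) ℚ).det •
          matAct ((y : GL (Fin n) ℚ) : Matrix (Fin n) (Fin n) ℚ) f with hu
      have hrw : f - (((x * y : GL (Fin n) ℚ) : Matrix (Fin n) (Fin n) ℚ)).det •
          matAct (((x * y : GL (Fin n) ℚ) : Matrix (Fin n) (Fin n) ℚ)) f
            = (f - u) + (u + matAct ((x : GL (Fin n) ℚ) : Matrix (Fin n) (Fin n) ℚ) u) := by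
        rw [matAct_units_mul, Units.val_mul, Matrix.det_mul, hdx, hu, _root_.map_smul]
        rw [neg_mul, one_mul, neg_smul]
        abel
      rw [hrw]
      apply Submodule.add_mem _ ih
      apply hle
      rw [mem_polyInvariantsElem, map_add]
      have : matAct ((x : GL (Fin n) ℚ) : Matrix (Fin n) (Fin n) ℚ)
          (matAct ((x : GL (Fin n) ℚ) : Matrix (Fin n) (Fin n) ℚ) u) = u := by
        rw [← matAct_units_mul, hxx, Units.val_one, matAct_one']
      rw [this]
      abel

end AuxLemmas

/-- If `s ≠ t` are reflections in `GL_n(ℚ)` generating a finite subgroup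
`R = ⟨s, t⟩`, then `ℚ[x_1, …, x_n]` is the internal direct sum of the relative invariants
`ℚ[x_1, …, x_n]^R_det` and the sum `ℚ[x_1, …, x_n]^s + ℚ[x_1, …, x_n]^t`: the two subspaces
intersect trivially and their sum is everything. -/
theorem polynomial_direct_sum_relInvariants {n : ℕ} (s t : GL (Fin n) ℚ)
    (hs : IsReflection s) (ht : IsReflection t) (hst : s ≠ t)
    (hfin : ((Subgroup.closure {s, t} : Subgroup (GL (Fin n) ℚ)) : Set (GL (Fin n) ℚ)).Finite) :
    polyRelInvariants (Subgroup.closure {s, t}) ⊓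
        (polyInvariantsElem s ⊔ polyInvariantsElem t) = ⊥ ∧
      polyRelInvariants (Subgroup.closure {s, t}) ⊔
        (polyInvariantsElem s ⊔ polyInvariantsElem t) = ⊤ := by
  classical
  rcases Nat.eq_zero_or_pos n with hn0 | hn
  · subst hn0
    exact absurd (Units.ext (Subsingleton.elim _ _)) hst
  have hsR : s ∈ Subgroup.closure {s, t} := Subgroup.subset_closure (Set.mem_insert _ _)
  have htR : t ∈ Subgroup.closure {s, t} :=
    Subgroup.subset_closure (Set.mem_insert_of_mem _ rfl)
  have hds := refl_det_neg_one hn hs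
  have hdt := refl_det_neg_one hn ht
  have hss := hs.1
  have htt := ht.1
  set R : Subgroup (GL (Fin n) ℚ) := Subgroup.closure {s, t} with hR
  set G : Finset (GL (Fin n) ℚ) := hfin.toFinset with hG
  have hmem : ∀ g, g ∈ G ↔ g ∈ R := fun g => Set.Finite.mem_toFinset hfin
  set S : MvPolynomial (Fin n) ℚ → MvPolynomial (Fin n) ℚ := fun f =>
    ∑ g ∈ G, ((g : GL (Fin n) ℚ) : Matrix (Fin n) (Fin n) ℚ).det •
      matAct ((g : GL (Fin n) ℚ) : Matrix (Fin n) (Fin n) ℚ) f with hS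
  have hcard : (0 : ℚ) < (G.card : ℚ) := by
    have h1 : (1 : GL (Fin n) ℚ) ∈ G := (hmem 1).2 (Subgroup.one_mem _)
    exact_mod_cast Finset.card_pos.2 ⟨1, h1⟩
  set c : ℚ := ((G.card : ℚ))⁻¹ with hc
  have hcc : c * (G.card : ℚ) = 1 := inv_mul_cancel₀ (ne_of_gt hcard)
  have hdsq : ∀ g ∈ R, ((g : GL (Fin n) ℚ) : Matrix (Fin n) (Fin n) ℚ).det *
      ((g : GL (Fin n) ℚ) : Matrix (Fin n) (Fin n) ℚ).det = 1 := by
    intro g hg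
    rcases det_pm s t hds hdt hg with h | h <;> rw [h] <;> norm_num
  have hGmul : ∀ a ∈ R, ∀ i : GL (Fin n) ℚ, i ∈ G ↔ a * i ∈ G := by
    intro a ha i
    rw [hmem, hmem]
    constructor
    · exact fun h => R.mul_mem ha h
    · intro h
      have := R.mul_mem (R.inv_mem ha) h
      rwa [inv_mul_cancel_left] at this
  have hGmulr : ∀ a ∈ R, ∀ i : GL (Fin n) ℚ, i ∈ G ↔ i * a ∈ G := by
    intro a ha i
    rw [hmem, hmem]
    constructor
    · exact fun h => R.mul_mem h ha
    · intro h
      have := R.mul_mem h (R.inv_mem ha)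
      rwa [mul_inv_cancel_right] at this
  -- S is additive
  have hSadd : ∀ a b, S (a + b) = S a + S b := by
    intro a b
    rw [hS]
    simp only [map_add, smul_add]
    exact Finset.sum_add_distrib
  -- (1) S f is a relative invariant
  have hSrel : ∀ h' ∈ R, ∀ f, matAct ((h' : GL (Fin n) ℚ) : Matrix (Fin n) (Fin n) ℚ) (S f)
      = ((h' : GL (Fin n) ℚ) : Matrix (Fin n) (Fin n) ℚ).det • S f := by
    intro h' hh' f
    have hinv : (((h'⁻¹ : GL (Fin n) ℚ) : Matrix (Fin n) (Fin n) ℚ)).det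
        = ((h' : GL (Fin n) ℚ) : Matrix (Fin n) (Fin n) ℚ).det := by
      have h1 : (((h'⁻¹ : GL (Fin n) ℚ) : Matrix (Fin n) (Fin n) ℚ)).det
          * ((h' : GL (Fin n) ℚ) : Matrix (Fin n) (Fin n) ℚ).det = 1 := by
        rw [← Matrix.det_mul, ← Units.val_mul, inv_mul_cancel, Units.val_one, Matrix.det_one]
      rcases det_pm s t hds hdt hh' with h | h <;> rw [h] at h1 ⊢ <;> linarith
    calc matAct ((h' : GL (Fin n) ℚ) : Matrix (Fin n) (Fin n) ℚ) (S f)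
        = ∑ g ∈ G, ((g : GL (Fin n) ℚ) : Matrix (Fin n) (Fin n) ℚ).det •
            matAct (((h' * g : GL (Fin n) ℚ) : Matrix (Fin n) (Fin n) ℚ)) f := by
          rw [hS, map_sum]
          apply Finset.sum_congr rfl
          intro g _
          rw [_root_.map_smul, matAct_units_mul]
      _ = ∑ g ∈ G, (((h'⁻¹ * g : GL (Fin n) ℚ) : Matrix (Fin n) (Fin n) ℚ)).det •
            matAct ((g : GL (Fin n) ℚ) : Matrix (Fin n) (Fin n) ℚ) f := by
          apply Finset.sum_equiv (Equiv.mulLeft h')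
          · intro i
            simpa using hGmul h' hh' i
          · intro i _
            simp only [Equiv.coe_mulLeft]
            rw [inv_mul_cancel_left]
      _ = ((h' : GL (Fin n) ℚ) : Matrix (Fin n) (Fin n) ℚ).det • S f := by
          rw [hS, Finset.smul_sum]
          apply Finset.sum_congr rfl
          intro g _
          rw [Units.val_mul, Matrix.det_mul, hinv, smul_smul]
  -- (2) S fixes relative invariants up to card
  have hSfix : ∀ f ∈ polyRelInvariants R, S f = (G.card : ℚ) • f := by
    intro f hf
    simp only [hS]
    have : ∀ g ∈ G, ((g : GL (Fin n) ℚ) : Matrix (Fin n) (Fin n) ℚ).det •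
        matAct ((g : GL (Fin n) ℚ) : Matrix (Fin n) (Fin n) ℚ) f = f := by
      intro g hg
      rw [hf g ((hmem g).1 hg), smul_smul, hdsq g ((hmem g).1 hg), one_smul]
    rw [Finset.sum_congr rfl this, Finset.sum_const, ← Nat.cast_smul_eq_nsmul ℚ]
  -- (3) S kills the invariants of s and of t
  have hSkill : ∀ (x : GL (Fin n) ℚ), x ∈ R → x * x = 1 →
      ((x : GL (Fin n) ℚ) : Matrix (Fin n) (Fin n) ℚ).det = -1 →
      ∀ f ∈ polyInvariantsElem x, S f = 0 := by
    intro x hxR hxx hdx f hfx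
    have key : S f = -S f := by
      calc S f = ∑ g ∈ G, (((g * x : GL (Fin n) ℚ) : Matrix (Fin n) (Fin n) ℚ)).det •
            matAct (((g * x : GL (Fin n) ℚ) : Matrix (Fin n) (Fin n) ℚ)) f := by
            apply Finset.sum_equiv (Equiv.mulRight x)
            · intro i
              simpa using hGmulr x hxR i
            · intro i _
              simp only [Equiv.coe_mulRight]
              rw [show i * x * x = i by rw [mul_assoc, hxx, mul_one]]
        _ = -S f := by
            rw [hS, ← Finset.sum_neg_distrib]
            apply Finset.sum_congr rfl
            intro g _
            rw [matAct_units_mul, (mem_polyInvariantsElem x f).1 hfx,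
              Units.val_mul, Matrix.det_mul, hdx, mul_neg_one, neg_smul]
    have h2 : S f + S f = 0 := by nth_rewrite 1 [key]; abel
    have h2' : (2:ℚ) • S f = 0 := by rw [two_smul]; exact h2
    have h3 : S f = (2:ℚ)⁻¹ • ((2:ℚ) • S f) := by rw [smul_smul]; norm_num
    rw [h3, h2', smul_zero]
  have hSkillSup : ∀ f ∈ polyInvariantsElem s ⊔ polyInvariantsElem t, S f = 0 := by
    intro f hf
    obtain ⟨a, ha, b, hb, rfl⟩ := Submodule.mem_sup.mp hf
    rw [hSadd, hSkill s hsR hss hds a ha, hSkill t htR htt hdt b hb, add_zero]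
  constructor
  · rw [eq_bot_iff]
    intro f hf
    obtain ⟨hf1, hf2⟩ := Submodule.mem_inf.mp hf
    have h1 : S f = (G.card : ℚ) • f := hSfix f hf1
    have h2 : S f = 0 := hSkillSup f hf2
    rw [h2] at h1
    rw [Submodule.mem_bot]
    have h4 : f = c • ((G.card : ℚ) • f) := by rw [smul_smul, hcc, one_smul]
    rw [h4, ← h1, smul_zero]
  · rw [eq_top_iff]
    intro f _
    refine Submodule.mem_sup.mpr ⟨c • S f, ?_, f - c • S f, ?_, by abel⟩
    · exact Submodule.smul_mem _ _ (fun g hg => hSrel g hg f)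
    · have hkey : f - c • S f = c • ∑ g ∈ G,
          (f - ((g : GL (Fin n) ℚ) : Matrix (Fin n) (Fin n) ℚ).det •
            matAct ((g : GL (Fin n) ℚ) : Matrix (Fin n) (Fin n) ℚ) f) := by
        simp only [hS]
        rw [Finset.sum_sub_distrib, Finset.sum_const, smul_sub,
          ← Nat.cast_smul_eq_nsmul ℚ, smul_smul, hcc, one_smul]
      rw [hkey]
      apply Submodule.smul_mem
      apply Submodule.sum_mem
      intro g hg
      exact sub_det_smul_mem hss htt hds hdt ((hmem g).1 hg) f
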